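/- The Möbius pattern complexity of OMB_n is exactly n+1: the only patterns attainable over the Möbius support of OMB_n (excluding the empty set) are the strings 1^i 0^{n-i} for i ∈ {0,1,...,n}, each attained by input 0^{n-i}1^i. -/
import Mathlib


/-- `AND_S(x)` as a Boolean. -/
def andB {n : ℕ} (S : Finset (Fin n)) (x : Fin n → Bool) : Bool :=
  decide (∀ i ∈ S, x i = true)

/-- The pattern of `x` on the Möbius support of `OMB_n` (excluding `∅`): the `j`-th entry
is the evaluation of the suffix monomial `AND_{{j,…,n}}` on `x`. -/
def ombPattern (n : ℕ) (x : Fin n → Bool) : Fin n → Bool :=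
  fun j => andB (Finset.univ.filter fun i : Fin n => (j : ℕ) ≤ i.val) x

/-- The Möbius pattern complexity of `OMB_n` is exactly `n+1`: the attainable patterns are
precisely the strings `1^i 0^{n-i}` for `0 ≤ i ≤ n` (pattern `1^i 0^{n-i}` being attained by
the input `0^{n-i} 1^i`). -/
theorem stmt7 (n : ℕ) (hn : 0 < n) :
    Finset.univ.image (ombPattern n) =
      (Finset.range (n + 1)).image (fun i => fun j : Fin n => decide (n - i ≤ (j : ℕ))) ∧
    (Finset.univ.image (ombPattern n)).card = n + 1 := by
  classical
  have key : Finset.univ.image (ombPattern n) =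
      (Finset.range (n + 1)).image (fun i => fun j : Fin n => decide (n - i ≤ (j : ℕ))) := by
    apply Finset.ext
    intro p
    simp only [Finset.mem_image, Finset.mem_univ, true_and, Finset.mem_range]
    constructor
    · rintro ⟨x, rfl⟩
      have hex : ∃ j, ∀ m : Fin n, j ≤ m.val → x m = true :=
        ⟨n, fun m hm => absurd m.isLt (by omega)⟩
      set t := Nat.find hex with hts
      have htn : t ≤ n := Nat.find_le (fun m hm => absurd m.isLt (by omega))
      have hspec : ∀ m : Fin n, t ≤ m.val → x m = true := Nat.find_spec hex
      refine ⟨n - t, by omega, ?_⟩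
      funext j
      have hnt : n - (n - t) = t := by omega
      rw [hnt]
      unfold ombPattern andB
      rw [decide_eq_decide]
      constructor
      · intro h i hi
        simp only [Finset.mem_filter, Finset.mem_univ, true_and] at hi
        exact hspec i (by omega)
      · intro hall
        exact Nat.find_min' hex (fun m hm =>
          hall m (by simp only [Finset.mem_filter, Finset.mem_univ, true_and]; exact hm))
    · rintro ⟨i, hi, rfl⟩
      refine ⟨fun j => decide (n - i ≤ (j : ℕ)), ?_⟩
      funext j
      unfold ombPattern andB
      rw [decide_eq_decide]
      constructor
      · intro hall
        have := hall j (by simp)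
        simpa using this
      · intro h m hm
        simp only [Finset.mem_filter, Finset.mem_univ, true_and] at hm
        simp only [decide_eq_true_eq]
        omega
  refine ⟨key, ?_⟩
  rw [key]
  rw [Finset.card_image_of_injOn, Finset.card_range]
  intro a ha b hb hEq
  simp only [Finset.mem_coe, Finset.mem_range] at ha hb
  by_contra hne
  have hab : n - a ≠ n - b := by omega
  rcases Nat.lt_or_ge (n - a) (n - b) with h | h
  · have h1 : n - a < n := by omega
    have := congrFun hEq ⟨n - a, h1⟩
    simp only [decide_eq_decide] at this
    simp at this
    omega
  · have h' : n - b < n - a := by omega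
    have h1 : n - b < n := by omega
    have := congrFun hEq ⟨n - b, h1⟩
    simp only [decide_eq_decide] at this
    simp at this
    omega
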